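/- Let P ≥ 1 and let u, v ∈ ℂ^{P+1}. If |Σ_{n=0}^{P} u[n]·η^n|² = |Σ_{n=0}^{P} v[n]·η^n|² for every η ∈ S¹, then conj(u[0])·u[P] = conj(v[0])·v[P]. That is, the product of the conjugated first entry with the last entry (the top autocorrelation coefficient) is determined by the Fourier intensity function. -/

import Mathlib

open Complex BigOperators Polynomial

noncomputable def pPoly (P : ℕ) (u : Fin (P + 1) → ℂ) : Polynomial ℂ :=
  ∑ n : Fin (P + 1), Polynomial.C (u n) * Polynomial.X ^ (n : ℕ)

noncomputable def qPoly (P : ℕ) (u : Fin (P + 1) → ℂ) : Polynomial ℂ :=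
  ∑ m : Fin (P + 1), Polynomial.C ((starRingEnd ℂ) (u m)) * Polynomial.X ^ (P - (m : ℕ))

lemma coeff_pPoly_gt {P : ℕ} (u : Fin (P + 1) → ℂ) {k : ℕ} (hk : P < k) :
    (pPoly P u).coeff k = 0 := by
  simp only [pPoly, Polynomial.finset_sum_coeff, Polynomial.coeff_C_mul,
    Polynomial.coeff_X_pow]
  apply Finset.sum_eq_zero
  intro n _
  have : (n : ℕ) ≠ k := by omega
  simp [Ne.symm this]

lemma coeff_qPoly_gt {P : ℕ} (u : Fin (P + 1) → ℂ) {k : ℕ} (hk : P < k) :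
    (qPoly P u).coeff k = 0 := by
  simp only [qPoly, Polynomial.finset_sum_coeff, Polynomial.coeff_C_mul,
    Polynomial.coeff_X_pow]
  apply Finset.sum_eq_zero
  intro n _
  have : P - (n : ℕ) ≠ k := by omega
  simp [Ne.symm this]

lemma coeff_pPoly_top {P : ℕ} (u : Fin (P + 1) → ℂ) :
    (pPoly P u).coeff P = u (Fin.last P) := by
  simp only [pPoly, Polynomial.finset_sum_coeff, Polynomial.coeff_C_mul,
    Polynomial.coeff_X_pow]
  rw [Finset.sum_eq_single (Fin.last P)]
  · simp [Fin.last]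
  · intro n _ hn
    have : (n : ℕ) ≠ P := by
      intro hc
      apply hn
      apply Fin.ext
      simp [hc, Fin.last]
    simp [Ne.symm this]
  · simp

lemma coeff_qPoly_top {P : ℕ} (u : Fin (P + 1) → ℂ) :
    (qPoly P u).coeff P = (starRingEnd ℂ) (u 0) := by
  simp only [qPoly, Polynomial.finset_sum_coeff, Polynomial.coeff_C_mul,
    Polynomial.coeff_X_pow]
  rw [Finset.sum_eq_single (0 : Fin (P + 1))]
  · simp
  · intro n _ hn
    have hn' : (n : ℕ) ≠ 0 := by
      intro hc
      exact hn (Fin.ext hc)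
    have hle : (n : ℕ) ≤ P := by omega
    have : P - (n : ℕ) ≠ P := by omega
    simp [Ne.symm this]
  · simp

lemma circle_infinite : Set.Infinite {η : ℂ | ‖η‖ = 1} := by
  apply Set.infinite_of_injOn_mapsTo (f := fun t : ℝ => Complex.exp (t * Complex.I))
    (s := Set.Ioo (0 : ℝ) 1)
  · intro x hx y hy hxy
    rw [Complex.exp_eq_exp_iff_exists_int] at hxy
    obtain ⟨n, hn⟩ := hxy
    have h2 : ((x : ℂ) - (y + n * (2 * Real.pi))) * Complex.I = 0 := by
      push_cast at hn ⊢
      linear_combination hn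
    have h3 := (mul_eq_zero.1 h2).resolve_right Complex.I_ne_zero
    have hx' : (x : ℂ) = y + n * (2 * Real.pi) := by linear_combination h3
    have hxr : x = y + n * (2 * Real.pi) := by
      exact_mod_cast hx'
    have hn0 : n = 0 := by
      rcases lt_trichotomy n 0 with hlt | heq | hgt
      · exfalso
        have h5 : (n : ℝ) ≤ -1 := by exact_mod_cast (by omega : n ≤ -1)
        have h6 := mul_le_mul_of_nonneg_right h5 (by positivity : (0:ℝ) ≤ 2 * Real.pi)
        have h7 : (3 : ℝ) < Real.pi := Real.pi_gt_three
        linarith [hx.1, hx.2, hy.1, hy.2]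
      · exact heq
      · exfalso
        have h5 : (1 : ℝ) ≤ (n : ℝ) := by exact_mod_cast hgt
        have h6 := mul_le_mul_of_nonneg_right h5 (by positivity : (0:ℝ) ≤ 2 * Real.pi)
        have h7 : (3 : ℝ) < Real.pi := Real.pi_gt_three
        linarith [hx.1, hx.2, hy.1, hy.2]
    rw [hn0] at hxr
    simpa using hxr
  · intro x _
    exact Complex.norm_exp_ofReal_mul_I x
  · exact Set.Ioo_infinite (by norm_num)

lemma eval_pq {P : ℕ} (u : Fin (P + 1) → ℂ) {η : ℂ} (hη : ‖η‖ = 1) :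
    Polynomial.eval η (pPoly P u * qPoly P u) =
      η ^ P * ((‖∑ n : Fin (P + 1), u n * η ^ (n : ℕ)‖ ^ 2 : ℝ) : ℂ) := by
  have hη0 : η ≠ 0 := by
    intro hc; rw [hc] at hη; simp at hη
  have hns : Complex.normSq η = 1 := by
    rw [← Complex.sq_norm, hη]; norm_num
  have hconj : (starRingEnd ℂ) η = η⁻¹ := by
    rw [Complex.inv_def, hns]; simp
  set S : ℂ := ∑ n : Fin (P + 1), u n * η ^ (n : ℕ) with hS
  have hp : Polynomial.eval η (pPoly P u) = S := by
    simp [pPoly, hS, Polynomial.eval_finset_sum]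
  have hq : Polynomial.eval η (qPoly P u) = η ^ P * (starRingEnd ℂ) S := by
    simp only [qPoly, Polynomial.eval_finset_sum, Polynomial.eval_mul,
      Polynomial.eval_C, Polynomial.eval_pow, Polynomial.eval_X, hS, map_sum,
      map_mul, map_pow, hconj, Finset.mul_sum]
    apply Finset.sum_congr rfl
    intro n _
    have hle : (n : ℕ) ≤ P := by omega
    have : η ^ (P - (n : ℕ)) = η ^ P * (η⁻¹) ^ (n : ℕ) := by
      rw [inv_pow, eq_mul_inv_iff_mul_eq₀ (pow_ne_zero _ hη0), ← pow_add]
      congr 1; omega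
    rw [this]; ring
  rw [Polynomial.eval_mul, hp, hq]
  have habs : ((‖S‖ ^ 2 : ℝ) : ℂ) = S * (starRingEnd ℂ) S := by
    rw [Complex.mul_conj]
    norm_cast
    exact Complex.sq_norm S
  rw [habs]; ring

/-- the top autocorrelation coefficient `conj(u[0])·u[P]` is
determined by the Fourier intensity function on the unit circle. -/
theorem top_autocorrelation_determined
    (P : ℕ) (hP : 1 ≤ P) (u v : Fin (P + 1) → ℂ)
    (h : ∀ η : ℂ, ‖η‖ = 1 →
      ‖∑ n : Fin (P + 1), u n * η ^ (n : ℕ)‖ ^ 2 =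
      ‖∑ n : Fin (P + 1), v n * η ^ (n : ℕ)‖ ^ 2) :
    (starRingEnd ℂ) (u 0) * u (Fin.last P) =
    (starRingEnd ℂ) (v 0) * v (Fin.last P) := by
  have hpoly : pPoly P u * qPoly P u = pPoly P v * qPoly P v := by
    apply Polynomial.eq_of_infinite_eval_eq
    apply Set.Infinite.mono _ circle_infinite
    intro η hη
    simp only [Set.mem_setOf_eq] at hη ⊢
    rw [eval_pq u hη, eval_pq v hη, h η hη]
  have hc := congrArg (fun p => Polynomial.coeff p (2 * P)) hpoly
  simp only [Polynomial.coeff_mul] at hc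
  have key : ∀ w : Fin (P + 1) → ℂ,
      (∑ x ∈ Finset.HasAntidiagonal.antidiagonal (2 * P), (pPoly P w).coeff x.1 * (qPoly P w).coeff x.2)
        = w (Fin.last P) * (starRingEnd ℂ) (w 0) := by
    intro w
    rw [Finset.sum_eq_single (P, P)]
    · rw [coeff_pPoly_top, coeff_qPoly_top]
    · intro x hx hne
      rw [Finset.HasAntidiagonal.mem_antidiagonal] at hx
      rcases lt_or_ge P x.1 with h1 | h1
      · rw [coeff_pPoly_gt w h1, zero_mul]
      · have h2 : P < x.2 := by
          rcases lt_or_eq_of_le h1 with h1' | h1'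
          · omega
          · exfalso; apply hne; ext <;> omega
        rw [coeff_qPoly_gt w h2, mul_zero]
    · intro hc
      exfalso
      exact hc (by rw [Finset.HasAntidiagonal.mem_antidiagonal]; omega)
  rw [key u, key v] at hc
  linear_combination hc
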